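/- Let m ≥ 1 and let C ∈ ℂ^{m×2m} be a system of boundary conditions of rank m. Then C is normalized if and only if C is in minimal form, i.e. Σ_{j=1}^m k_j(C) ≤ Σ_{j=1}^m k_j(T·C) for every invertible m×m complex matrix T. -/

import Mathlib

/-- A system of boundary conditions of order `m` is a matrix `C ∈ ℂ^{m×2m}`; we index
the `2m` columns by `Fin m ⊕ Fin m`: `Sum.inl k` is the coefficient of `y^{(k)}(0)` and
`Sum.inr k` that of `y^{(k)}(1)`.  The order `k_j(C)` of row `j` is the largest `k` with
`(C_{j,k}, C_{j,m+k}) ≠ (0,0)`. -/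
noncomputable def rowOrder {m : ℕ} (C : Matrix (Fin m) (Fin m ⊕ Fin m) ℂ) (j : Fin m) : ℕ :=
  sSup {k : ℕ | ∃ h : k < m, C j (Sum.inl ⟨k, h⟩) ≠ 0 ∨ C j (Sum.inr ⟨k, h⟩) ≠ 0}

/-- The leading pair `(α_j, β_j) = (C_{j,k_j}, C_{j,m+k_j})` of row `j`. -/
noncomputable def leadingPair {m : ℕ} (C : Matrix (Fin m) (Fin m ⊕ Fin m) ℂ) (j : Fin m) :
    ℂ × ℂ :=
  if h : rowOrder C j < m then
    (C j (Sum.inl ⟨rowOrder C j, h⟩), C j (Sum.inr ⟨rowOrder C j, h⟩))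
  else 0

/-- The system `C` is normalized if, for every value `k`, the leading pairs of the rows
of order `k` are linearly independent in `ℂ²`. -/
def IsNormalized {m : ℕ} (C : Matrix (Fin m) (Fin m ⊕ Fin m) ℂ) : Prop :=
  ∀ k : ℕ, LinearIndependent ℂ (fun j : {j : Fin m // rowOrder C j = k} => leadingPair C j.1)

namespace Stmt13
open Matrix Submodule Finset Module

variable {m : ℕ}

def ordSet (m : ℕ) (r : Fin m ⊕ Fin m → ℂ) : Set ℕ :=
  {k : ℕ | ∃ h : k < m, r (Sum.inl ⟨k, h⟩) ≠ 0 ∨ r (Sum.inr ⟨k, h⟩) ≠ 0}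

noncomputable def ord (m : ℕ) (r : Fin m ⊕ Fin m → ℂ) : ℕ := sSup (ordSet m r)

lemma rowOrder_eq_ord (C : Matrix (Fin m) (Fin m ⊕ Fin m) ℂ) (j : Fin m) :
    rowOrder C j = ord m (C j) := rfl

lemma ordSet_bdd (r : Fin m ⊕ Fin m → ℂ) : BddAbove (ordSet m r) :=
  ⟨m, fun _ hk => le_of_lt hk.1⟩

lemma ord_lt (hm : 0 < m) (r : Fin m ⊕ Fin m → ℂ) : ord m r < m := by
  by_cases hS : (ordSet m r).Nonempty
  · exact (Nat.sSup_mem hS (ordSet_bdd r)).1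
  · rw [Set.not_nonempty_iff_eq_empty] at hS
    rw [ord, hS, csSup_empty]
    exact hm

lemma coord_eq_zero {r : Fin m ⊕ Fin m → ℂ} {k : ℕ} (h : k < m) (hk : ord m r < k) :
    r (Sum.inl ⟨k, h⟩) = 0 ∧ r (Sum.inr ⟨k, h⟩) = 0 := by
  by_contra hc
  rw [not_and_or] at hc
  have hmem : k ∈ ordSet m r := ⟨h, by tauto⟩
  exact absurd (le_csSup (ordSet_bdd r) hmem) (not_le.mpr hk)

lemma ord_le_iff {r : Fin m ⊕ Fin m → ℂ} {k : ℕ} :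
    ord m r ≤ k ↔ ∀ i : Fin m, k < (i : ℕ) → r (Sum.inl i) = 0 ∧ r (Sum.inr i) = 0 := by
  constructor
  · intro h i hi
    exact coord_eq_zero i.2 (lt_of_le_of_lt h hi)
  · intro h
    by_contra hk
    push_neg at hk
    have hS : (ordSet m r).Nonempty := by
      rcases Set.eq_empty_or_nonempty (ordSet m r) with he | hne
      · rw [ord, he, csSup_empty] at hk; simp at hk
      · exact hne
    obtain ⟨hlt, hne⟩ := Nat.sSup_mem hS (ordSet_bdd r)
    have := h ⟨ord m r, hlt⟩ hk
    tauto

noncomputable def V (m k : ℕ) : Submodule ℂ (Fin m ⊕ Fin m → ℂ) where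
  carrier := {r | ∀ i : Fin m, k < (i : ℕ) → r (Sum.inl i) = 0 ∧ r (Sum.inr i) = 0}
  add_mem' := by
    intro a b ha hb i hi
    simp [(ha i hi).1, (ha i hi).2, (hb i hi).1, (hb i hi).2]
  zero_mem' := by intro i hi; simp
  smul_mem' := by
    intro c a ha i hi
    simp [(ha i hi).1, (ha i hi).2]

lemma mem_V {r : Fin m ⊕ Fin m → ℂ} {k : ℕ} : r ∈ V m k ↔ ord m r ≤ k := ord_le_iff.symm

lemma coeff_eq_zero_of_normalized (C : Matrix (Fin m) (Fin m ⊕ Fin m) ℂ)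
    (hC : IsNormalized C) (g : Fin m → ℂ) (k : ℕ)
    (hv : (∑ j, g j • C j) ∈ V m k) :
    ∀ j, k < rowOrder C j → g j = 0 := by
  classical
  by_contra h
  push_neg at h
  obtain ⟨j1, hj1k, hj1⟩ := h
  have hS : (univ.filter (fun j => g j ≠ 0 ∧ k < rowOrder C j)).Nonempty :=
    ⟨j1, by simp [hj1, hj1k]⟩
  obtain ⟨j0, hj0S, hj0max⟩ :=
    (univ.filter (fun j => g j ≠ 0 ∧ k < rowOrder C j)).exists_max_image
      (fun j => rowOrder C j) hS
  have hj0 := Finset.mem_filter.mp hj0S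
  have hkk' : k < rowOrder C j0 := hj0.2.2
  have hm0 : 0 < m := j0.pos
  have hk'm : rowOrder C j0 < m := ord_lt hm0 _
  have hhigh : ∀ j, rowOrder C j0 < rowOrder C j → g j = 0 := by
    intro j hj
    by_contra hg
    have hjS : j ∈ univ.filter (fun j => g j ≠ 0 ∧ k < rowOrder C j) :=
      Finset.mem_filter.mpr ⟨Finset.mem_univ _, hg, lt_trans hkk' hj⟩
    exact absurd (hj0max j hjS) (not_le.mpr hj)
  have hco := hv ⟨rowOrder C j0, hk'm⟩ hkk'
  have hsum : ∀ x : Fin m ⊕ Fin m, (∑ j, g j • C j) x = ∑ j, g j * C j x := by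
    intro x; simp [Finset.sum_apply]
  have hrestrict : ∀ x : Fin m ⊕ Fin m,
      (∀ j : Fin m, rowOrder C j < rowOrder C j0 → C j x = 0) →
      ∑ j, g j * C j x
        = ∑ j : {j : Fin m // rowOrder C j = rowOrder C j0}, g j.1 * C j.1 x := by
    intro x hx
    rw [← Finset.sum_subtype (univ.filter (fun j => rowOrder C j = rowOrder C j0))
      (by simp) (fun j => g j * C j x)]
    refine (Finset.sum_filter_of_ne ?_).symm
    intro j _ hne
    rcases lt_trichotomy (rowOrder C j) (rowOrder C j0) with hlt | heq | hgt
    · exact absurd (by rw [hx j hlt, mul_zero]) hne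
    · exact heq
    · exact absurd (by rw [hhigh j hgt, zero_mul]) hne
  have h1 : ∑ j : {j : Fin m // rowOrder C j = rowOrder C j0},
      g j.1 * C j.1 (Sum.inl ⟨rowOrder C j0, hk'm⟩) = 0 := by
    rw [← hrestrict _ (fun j hj => (coord_eq_zero hk'm (by rwa [← rowOrder_eq_ord])).1),
      ← hsum]
    exact hco.1
  have h2 : ∑ j : {j : Fin m // rowOrder C j = rowOrder C j0},
      g j.1 * C j.1 (Sum.inr ⟨rowOrder C j0, hk'm⟩) = 0 := by
    rw [← hrestrict _ (fun j hj => (coord_eq_zero hk'm (by rwa [← rowOrder_eq_ord])).2),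
      ← hsum]
    exact hco.2
  have hpair : ∀ j : {j : Fin m // rowOrder C j = rowOrder C j0},
      leadingPair C j.1 = (C j.1 (Sum.inl ⟨rowOrder C j0, hk'm⟩),
        C j.1 (Sum.inr ⟨rowOrder C j0, hk'm⟩)) := by
    intro j
    have hlt : rowOrder C j.1 < m := by rw [j.2]; exact hk'm
    have hfin : (⟨rowOrder C j.1, hlt⟩ : Fin m) = ⟨rowOrder C j0, hk'm⟩ := by
      simp only [Fin.mk.injEq]; exact j.2
    rw [leadingPair, dif_pos hlt, hfin]
  have hrel : ∑ j : {j : Fin m // rowOrder C j = rowOrder C j0},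
      (fun j : {j : Fin m // rowOrder C j = rowOrder C j0} => g j.1) j
        • leadingPair C j.1 = 0 := by
    refine Prod.ext ?_ ?_
    · rw [Prod.fst_sum]
      simp only [hpair, Prod.smul_mk, smul_eq_mul]
      exact h1
    · rw [Prod.snd_sum]
      simp only [hpair, Prod.smul_mk, smul_eq_mul]
      exact h2
  have := Fintype.linearIndependent_iff.mp (hC (rowOrder C j0)) _ hrel ⟨j0, rfl⟩
  exact hj0.2.1 this

lemma rows_linearIndependent {C : Matrix (Fin m) (Fin m ⊕ Fin m) ℂ} (hrank : C.rank = m) :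
    LinearIndependent ℂ (fun j => C j) := by
  rw [linearIndependent_iff_card_eq_finrank_span, Set.finrank]
  rw [Fintype.card_fin]; exact hrank.symm.trans (Matrix.rank_eq_finrank_span_row C)

lemma card_le_of_mem_span_V {W : Submodule ℂ (Fin m ⊕ Fin m → ℂ)}
    (R : Matrix (Fin m) (Fin m ⊕ Fin m) ℂ) (hind : LinearIndependent ℂ (fun j => R j))
    (hmem : ∀ j, R j ∈ W) (k : ℕ) :
    (univ.filter (fun j => rowOrder R j ≤ k)).card ≤ finrank ℂ ↥(W ⊓ V m k) := by
  classical
  rw [← Fintype.card_subtype]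
  have hind' : LinearIndependent ℂ (fun j : {j : Fin m // rowOrder R j ≤ k} => R j.1) :=
    hind.comp Subtype.val Subtype.val_injective
  rw [← finrank_span_eq_card hind']
  apply Submodule.finrank_mono
  rw [Submodule.span_le]
  rintro _ ⟨j, rfl⟩
  exact Submodule.mem_inf.mpr ⟨hmem j.1, mem_V.mpr (by rw [← rowOrder_eq_ord]; exact j.2)⟩

lemma finrank_le_card_of_normalized (C : Matrix (Fin m) (Fin m ⊕ Fin m) ℂ)
    (hC : IsNormalized C) (k : ℕ) :
    finrank ℂ ↥(span ℂ (Set.range fun j => C j) ⊓ V m k)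
      ≤ (univ.filter (fun j => rowOrder C j ≤ k)).card := by
  classical
  have hle : span ℂ (Set.range fun j => C j) ⊓ V m k
      ≤ span ℂ (Set.range (fun j : {j : Fin m // rowOrder C j ≤ k} => C j.1)) := by
    intro v hv
    rw [Submodule.mem_inf] at hv
    obtain ⟨hv1, hv2⟩ := hv
    obtain ⟨g, hg⟩ := (mem_span_range_iff_exists_fun ℂ).mp hv1
    have hzero : ∀ j, k < rowOrder C j → g j = 0 :=
      coeff_eq_zero_of_normalized C hC g k (by rw [hg]; exact hv2)
    have hveq : v = ∑ j : {j : Fin m // rowOrder C j ≤ k}, g j.1 • C j.1 := by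
      rw [← hg, ← Finset.sum_subtype (univ.filter (fun j => rowOrder C j ≤ k)) (by simp)
        (fun j => g j • C j)]
      refine (Finset.sum_filter_of_ne ?_).symm
      intro j _ hne
      by_contra hgt
      push_neg at hgt
      exact hne (by rw [hzero j hgt, zero_smul])
    rw [hveq]
    exact sum_mem fun j _ => smul_mem _ _ (subset_span ⟨j, rfl⟩)
  refine le_trans (Submodule.finrank_mono hle) ?_
  have := finrank_range_le_card (R := ℂ) (fun j : {j : Fin m // rowOrder C j ≤ k} => C j.1)
  rw [Set.finrank, Fintype.card_subtype] at this
  exact this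

lemma sum_rowOrder_eq (R : Matrix (Fin m) (Fin m ⊕ Fin m) ℂ) (hm0 : 0 < m) :
    ∑ j, rowOrder R j
      = ∑ k ∈ Finset.range m, (univ.filter (fun j => k < rowOrder R j)).card := by
  classical
  have h1 : ∀ j, rowOrder R j = ∑ k ∈ Finset.range m, if k < rowOrder R j then 1 else 0 := by
    intro j
    rw [← Finset.card_filter]
    have h2 : (Finset.range m).filter (fun k => k < rowOrder R j)
        = Finset.range (rowOrder R j) := by
      ext a
      simp only [Finset.mem_filter, Finset.mem_range]
      have := ord_lt hm0 (R j)
      rw [← rowOrder_eq_ord] at this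
      omega
    rw [h2, Finset.card_range]
  calc ∑ j, rowOrder R j
      = ∑ j, ∑ k ∈ Finset.range m, if k < rowOrder R j then 1 else 0 :=
        Finset.sum_congr rfl fun j _ => h1 j
    _ = ∑ k ∈ Finset.range m, ∑ j, if k < rowOrder R j then 1 else 0 := Finset.sum_comm
    _ = ∑ k ∈ Finset.range m, (univ.filter (fun j => k < rowOrder R j)).card :=
        Finset.sum_congr rfl fun k _ => (Finset.card_filter _ _).symm

lemma forward_dir (hm : 1 ≤ m) (C : Matrix (Fin m) (Fin m ⊕ Fin m) ℂ)
    (hrank : C.rank = m) (hC : IsNormalized C)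
    (T : Matrix (Fin m) (Fin m) ℂ) (hT : IsUnit T) :
    ∑ j, rowOrder C j ≤ ∑ j, rowOrder (T * C) j := by
  classical
  have hm0 : 0 < m := hm
  have hdet : IsUnit T.det := (Matrix.isUnit_iff_isUnit_det T).mp hT
  have hTCrank : (T * C).rank = m := by
    rw [Matrix.rank_mul_eq_right_of_isUnit_det T C hdet, hrank]
  have hCind := rows_linearIndependent hrank
  have hTCind := rows_linearIndependent hTCrank
  have hTCW : ∀ j, (T * C) j ∈ span ℂ (Set.range fun j => C j) := by
    intro j
    have hrow : (T * C) j = ∑ l, T j l • C l := by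
      funext x
      simp [Matrix.mul_apply, Finset.sum_apply]
    rw [hrow]
    exact sum_mem fun l _ => smul_mem _ _ (subset_span ⟨l, rfl⟩)
  have key : ∀ k, (univ.filter (fun j => rowOrder (T * C) j ≤ k)).card
      ≤ (univ.filter (fun j => rowOrder C j ≤ k)).card := fun k =>
    le_trans (card_le_of_mem_span_V (T * C) hTCind hTCW k)
      (finrank_le_card_of_normalized C hC k)
  rw [sum_rowOrder_eq C hm0, sum_rowOrder_eq (T * C) hm0]
  refine Finset.sum_le_sum fun k _ => ?_
  have hsplit : ∀ (R : Matrix (Fin m) (Fin m ⊕ Fin m) ℂ),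
      (univ.filter (fun j => rowOrder R j ≤ k)).card
        + (univ.filter (fun j => k < rowOrder R j)).card = m := by
    intro R
    have h := Finset.card_filter_add_card_filter_not
      (s := (univ : Finset (Fin m))) (p := fun j => rowOrder R j ≤ k)
    have hnot : univ.filter (fun j => ¬ rowOrder R j ≤ k)
        = univ.filter (fun j => k < rowOrder R j) := by
      apply Finset.filter_congr
      intro j _
      simp [not_le]
    rw [hnot] at h
    simpa using h
  have h1 := hsplit C
  have h2 := hsplit (T * C)
  have h3 := key k
  omega

lemma rowOrder_congr {C D : Matrix (Fin m) (Fin m ⊕ Fin m) ℂ} {j j' : Fin m}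
    (h : ∀ x, C j x = D j' x) : rowOrder C j = rowOrder D j' := by
  unfold rowOrder
  congr 1
  ext a
  simp only [Set.mem_setOf_eq, h]

lemma leadingPair_eq (C : Matrix (Fin m) (Fin m ⊕ Fin m) ℂ) {k : ℕ} (hkm : k < m)
    (j : {j : Fin m // rowOrder C j = k}) :
    leadingPair C j.1 = (C j.1 (Sum.inl ⟨k, hkm⟩), C j.1 (Sum.inr ⟨k, hkm⟩)) := by
  have hlt : rowOrder C j.1 < m := by rw [j.2]; exact hkm
  have hfin : (⟨rowOrder C j.1, hlt⟩ : Fin m) = ⟨k, hkm⟩ := by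
    simp only [Fin.mk.injEq]; exact j.2
  rw [leadingPair, dif_pos hlt, hfin]

lemma exists_better (C : Matrix (Fin m) (Fin m ⊕ Fin m) ℂ) (hrank : C.rank = m)
    (hnot : ¬ IsNormalized C) :
    ∃ T : Matrix (Fin m) (Fin m) ℂ, IsUnit T ∧
      ∑ j, rowOrder (T * C) j < ∑ j, rowOrder C j := by
  classical
  obtain ⟨k, hk⟩ := not_forall.mp hnot
  obtain ⟨g, hgsum, j0, hgj0⟩ := Fintype.not_linearIndependent_iff.mp hk
  have hCind := rows_linearIndependent hrank
  have hm0 : 0 < m := j0.1.pos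
  have hkm : k < m := by
    have := ord_lt hm0 (C j0.1); rw [← rowOrder_eq_ord, j0.2] at this; exact this
  set c : Fin m → ℂ := fun j => if h : rowOrder C j = k then g ⟨j, h⟩ else 0 with hc
  have hcg : ∀ j : {j : Fin m // rowOrder C j = k}, c j.1 = g j := by
    intro j
    simp only [hc]
    rw [dif_pos j.2]
  have hcj0 : c j0.1 ≠ 0 := by rw [hcg j0]; exact hgj0
  have hsupp : ∀ j, c j ≠ 0 → rowOrder C j = k := by
    intro j h
    by_contra hne
    simp only [hc, dif_neg hne] at h
    exact h rfl
  have hsum : ∀ x : Fin m ⊕ Fin m, (∑ j, c j • C j) x = ∑ j, c j * C j x := by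
    intro x; simp [Finset.sum_apply]
  have hrestrict : ∀ x : Fin m ⊕ Fin m,
      ∑ j, c j * C j x = ∑ j : {j : Fin m // rowOrder C j = k}, g j * C j.1 x := by
    intro x
    have e1 : ∑ j, c j * C j x
        = ∑ j ∈ univ.filter (fun j => rowOrder C j = k), c j * C j x := by
      refine (Finset.sum_filter_of_ne ?_).symm
      intro j _ hne
      refine hsupp j ?_
      intro h0
      exact hne (by rw [h0, zero_mul])
    rw [e1, Finset.sum_subtype (p := fun j => rowOrder C j = k)
      (univ.filter (fun j => rowOrder C j = k)) (by simp) (fun j => c j * C j x)]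
    exact Finset.sum_congr rfl fun j _ => by rw [hcg j]
  have hvhigh : ∀ i : Fin m, k ≤ (i : ℕ) →
      (∑ j, c j • C j) (Sum.inl i) = 0 ∧ (∑ j, c j • C j) (Sum.inr i) = 0 := by
    intro i hi
    rcases eq_or_lt_of_le hi with heq | hlt
    · have hieq : i = ⟨k, hkm⟩ := by ext; exact heq.symm
      rw [hieq]
      constructor
      · rw [hsum, hrestrict]
        have h1 := congrArg Prod.fst hgsum
        rw [Prod.fst_sum] at h1
        simp only [leadingPair_eq C hkm, Prod.smul_mk, smul_eq_mul, Prod.fst_zero] at h1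
        exact h1
      · rw [hsum, hrestrict]
        have h1 := congrArg Prod.snd hgsum
        rw [Prod.snd_sum] at h1
        simp only [leadingPair_eq C hkm, Prod.smul_mk, smul_eq_mul, Prod.snd_zero] at h1
        exact h1
    · constructor
      · rw [hsum]
        apply Finset.sum_eq_zero
        intro j _
        by_cases hcj : c j = 0
        · rw [hcj, zero_mul]
        · have h0 := (coord_eq_zero (r := C j) i.2
            (by rw [← rowOrder_eq_ord, hsupp j hcj]; exact hlt)).1
          rw [h0, mul_zero]
      · rw [hsum]
        apply Finset.sum_eq_zero
        intro j _
        by_cases hcj : c j = 0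
        · rw [hcj, zero_mul]
        · have h0 := (coord_eq_zero (r := C j) i.2
            (by rw [← rowOrder_eq_ord, hsupp j hcj]; exact hlt)).2
          rw [h0, mul_zero]
  by_cases hk0 : k = 0
  · exfalso
    have hveq : (∑ j, c j • C j) = 0 := by
      funext x
      cases x with
      | inl i => exact (hvhigh i (by omega)).1
      | inr i => exact (hvhigh i (by omega)).2
    exact hcj0 (Fintype.linearIndependent_iff.mp hCind c hveq j0.1)
  · have hk1 : 1 ≤ k := Nat.one_le_iff_ne_zero.mpr hk0
    set T : Matrix (Fin m) (Fin m) ℂ := Matrix.updateRow 1 j0.1 c with hT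
    have hc_eq : c = ∑ l, c l • (1 : Matrix (Fin m) (Fin m) ℂ) l := by
      funext x
      simp [Finset.sum_apply, Matrix.one_apply, mul_ite]
    have hdet : T.det = c j0.1 := by
      rw [hT]
      conv_lhs => rw [hc_eq]
      rw [Matrix.det_updateRow_sum]
      simp
    have hTunit : IsUnit T := by
      rw [Matrix.isUnit_iff_isUnit_det, hdet]
      exact isUnit_iff_ne_zero.mpr hcj0
    refine ⟨T, hTunit, ?_⟩
    have hrow_ne : ∀ j, j ≠ j0.1 → ∀ x, (T * C) j x = C j x := by
      intro j hj x
      rw [Matrix.mul_apply]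
      have hTj : T j = (1 : Matrix (Fin m) (Fin m) ℂ) j := by
        rw [hT]; exact Matrix.updateRow_ne hj
      rw [hTj]
      simp [Matrix.one_apply]
    have hrow_j0 : ∀ x, (T * C) j0.1 x = (∑ j, c j • C j) x := by
      intro x
      rw [Matrix.mul_apply, hsum]
      have hTj : T j0.1 = c := by rw [hT]; exact Matrix.updateRow_self
      rw [hTj]
    have hord_j0 : rowOrder (T * C) j0.1 < k := by
      have hle : rowOrder (T * C) j0.1 ≤ k - 1 := by
        rw [rowOrder_eq_ord, ord_le_iff]
        intro i hi
        have hki : k ≤ (i : ℕ) := by omega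
        exact ⟨by rw [hrow_j0]; exact (hvhigh i hki).1,
          by rw [hrow_j0]; exact (hvhigh i hki).2⟩
      omega
    refine Finset.sum_lt_sum (fun j _ => ?_) ⟨j0.1, Finset.mem_univ _, ?_⟩
    · by_cases hj : j = j0.1
      · subst hj
        refine le_of_lt ?_
        rw [j0.2]
        exact hord_j0
      · rw [rowOrder_congr (hrow_ne j hj)]
    · rw [j0.2]
      exact hord_j0

end Stmt13


/-- a rank-`m` system of boundary conditions is normalized iff it is in
minimal form, i.e. the sum of its row orders is minimal among all equivalent systems
`T·C`, `T` invertible. -/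
theorem stmt13 (m : ℕ) (hm : 1 ≤ m) (C : Matrix (Fin m) (Fin m ⊕ Fin m) ℂ)
    (hrank : C.rank = m) :
    IsNormalized C ↔
      ∀ T : Matrix (Fin m) (Fin m) ℂ, IsUnit T →
        ∑ j, rowOrder C j ≤ ∑ j, rowOrder (T * C) j := by
  constructor
  · intro hC T hT
    exact Stmt13.forward_dir hm C hrank hC T hT
  · intro hmin
    by_contra hnot
    obtain ⟨T, hT, hlt⟩ := Stmt13.exists_better C hrank hnot
    exact absurd (hmin T hT) (not_le.mpr hlt)
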